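/- (Measure of classical energy shells.) Let r ≥ 3/2. There exists a constant C = C(r) > 0 such that for every real-valued V ∈ L^r(ℝ³), every E > 0 and every δ ∈ (0, E/2], the Lebesgue measure of the phase-space set {(q,p) ∈ ℝ³×ℝ³ : | |p|²/2 + V(q) + E | ≤ δ} is at most C · δ · E^{−(r−1/2)} · ∫_{ℝ³} V_−(x)^r dx, where V_−(x) = max{−V(x), 0}. -/

import Mathlib

open MeasureTheory Real

noncomputable section

abbrev E3 := EuclideanSpace ℝ (Fin 3)

lemma shell_vol_bound (a δ : ℝ) (hδ : 0 < δ) :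
    volume {p : E3 | |‖p‖ ^ 2 / 2 + a| ≤ δ} ≤
      ENNReal.ofReal (Real.sqrt π ^ 3 / Real.Gamma (3 / 2 + 1) *
        (20 * δ * Real.sqrt (max (-a) 0 + δ))) := by
  set c0 : ℝ := Real.sqrt π ^ 3 / Real.Gamma (3 / 2 + 1) with hc0
  have hc0pos : 0 < c0 :=
    div_pos (pow_pos (Real.sqrt_pos.mpr Real.pi_pos) 3)
      (Real.Gamma_pos_of_pos (by norm_num))
  set b : ℝ := max (-a) 0 with hb
  have hbnn : 0 ≤ b := le_max_right _ _
  have hab : -a ≤ b := le_max_left _ _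
  set s : ℝ := Real.sqrt (b + δ) with hs
  set R : ℝ := Real.sqrt (2 * (b + δ)) with hR
  set ρ : ℝ := Real.sqrt (2 * (-a - δ)) with hρ
  have hsnn : 0 ≤ s := Real.sqrt_nonneg _
  have hRnn : 0 ≤ R := Real.sqrt_nonneg _
  have hρnn : 0 ≤ ρ := Real.sqrt_nonneg _
  have hs2 : s ^ 2 = b + δ := Real.sq_sqrt (by linarith)
  have hR2 : R ^ 2 = 2 * (b + δ) := Real.sq_sqrt (by linarith)
  have hRs : R ≤ 1.5 * s := by
    have h1 : (2 : ℝ) * (b + δ) ≤ (1.5 * s) ^ 2 := by nlinarith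
    calc R ≤ Real.sqrt ((1.5 * s) ^ 2) := Real.sqrt_le_sqrt h1
    _ = 1.5 * s := Real.sqrt_sq (by linarith)
  have hρR : ρ ≤ R := Real.sqrt_le_sqrt (by linarith)
  -- the shell is contained in the annulus
  have hsub : {p : E3 | |‖p‖ ^ 2 / 2 + a| ≤ δ} ⊆
      Metric.closedBall (0 : E3) R \ Metric.ball (0 : E3) ρ := by
    intro p hp
    simp only [Set.mem_setOf_eq] at hp
    have hp' := abs_le.mp hp
    have hn2 : ‖p‖ ^ 2 = ‖p‖ ^ 2 := rfl
    constructor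
    · rw [Metric.mem_closedBall, dist_zero_right]
      have h1 : ‖p‖ ^ 2 ≤ 2 * (b + δ) := by nlinarith [hp'.2]
      calc ‖p‖ = Real.sqrt (‖p‖ ^ 2) := (Real.sqrt_sq (norm_nonneg p)).symm
      _ ≤ R := Real.sqrt_le_sqrt h1
    · rw [Metric.mem_ball, dist_zero_right, not_lt]
      have h1 : 2 * (-a - δ) ≤ ‖p‖ ^ 2 := by nlinarith [hp'.1]
      calc ρ ≤ Real.sqrt (‖p‖ ^ 2) := Real.sqrt_le_sqrt h1
      _ = ‖p‖ := Real.sqrt_sq (norm_nonneg p)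
  -- key real inequality
  have hkey : R ^ 3 * c0 - ρ ^ 3 * c0 ≤ c0 * (20 * δ * s) := by
    have hmain : R ^ 3 - ρ ^ 3 ≤ 20 * δ * s := by
      rcases le_or_gt (-a) δ with hcase | hcase
      · -- inner radius irrelevant; b ≤ δ
        have hbδ : b ≤ δ := max_le hcase hδ.le
        nlinarith [pow_nonneg hρnn 3, mul_nonneg hδ.le hsnn, mul_nonneg hRnn hsnn]
      · -- -a > δ > 0, so b = -a
        have hbeq : b = -a := max_eq_left (by linarith)
        have hρ2 : ρ ^ 2 = 2 * (b - δ) := by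
          rw [hρ, Real.sq_sqrt (by nlinarith)]; rw [hbeq]
        nlinarith [mul_nonneg (mul_nonneg hρnn hρnn) (sub_nonneg.mpr hρR),
          mul_nonneg hρnn (sub_nonneg.mpr hρR), mul_nonneg hδ.le hsnn,
          mul_nonneg hRnn hsnn, sq_nonneg (R - ρ), sq_nonneg (R + ρ)]
    nlinarith [pow_nonneg hρnn 3]
  -- volume computation
  calc volume {p : E3 | |‖p‖ ^ 2 / 2 + a| ≤ δ}
      ≤ volume (Metric.closedBall (0 : E3) R \ Metric.ball (0 : E3) ρ) :=
        measure_mono hsub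
    _ = volume (Metric.closedBall (0 : E3) R) - volume (Metric.ball (0 : E3) ρ) := by
        apply measure_diff (Metric.ball_subset_closedBall.trans
            (Metric.closedBall_subset_closedBall hρR))
          measurableSet_ball.nullMeasurableSet measure_ball_lt_top.ne
    _ = ENNReal.ofReal (R ^ 3 * c0) - ENNReal.ofReal (ρ ^ 3 * c0) := by
        rw [EuclideanSpace.volume_closedBall, EuclideanSpace.volume_ball]
        simp only [Fintype.card_fin]
        rw [← ENNReal.ofReal_pow hRnn, ← ENNReal.ofReal_pow hρnn,
          ← ENNReal.ofReal_mul (pow_nonneg hRnn 3), ← ENNReal.ofReal_mul (pow_nonneg hρnn 3)]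
        norm_num [hc0]
    _ = ENNReal.ofReal (R ^ 3 * c0 - ρ ^ 3 * c0) :=
        (ENNReal.ofReal_sub _ (mul_nonneg (pow_nonneg hρnn 3) hc0pos.le)).symm
    _ ≤ ENNReal.ofReal (c0 * (20 * δ * s)) := ENNReal.ofReal_le_ofReal hkey

/-- Measure of classical energy shells: for `r ≥ 3/2` there is `C = C(r) > 0` such that for
every `V ∈ L^r(ℝ³)`, `E > 0` and `δ ∈ (0, E/2]`, the phase-space volume of
`{(q,p) : | |p|²/2 + V(q) + E | ≤ δ}` is at most `C δ E^{-(r-1/2)} ∫ V_-^r`. -/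
theorem classical_energy_shell_bound (r : ℝ) (hr : 3 / 2 ≤ r) :
    ∃ C > (0 : ℝ), ∀ V : E3 → ℝ, Measurable V → MemLp V (ENNReal.ofReal r) →
      ∀ E δ : ℝ, 0 < E → 0 < δ → δ ≤ E / 2 →
        volume {z : E3 × E3 | |‖z.2‖ ^ 2 / 2 + V z.1 + E| ≤ δ} ≤
          ENNReal.ofReal (C * δ * E ^ (-(r - 1 / 2)) * ∫ x : E3, max (-V x) 0 ^ r) := by
  set c0 : ℝ := Real.sqrt π ^ 3 / Real.Gamma (3 / 2 + 1) with hc0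
  have hc0pos : 0 < c0 :=
    div_pos (pow_pos (Real.sqrt_pos.mpr Real.pi_pos) 3)
      (Real.Gamma_pos_of_pos (by norm_num))
  refine ⟨c0 * 20 * Real.sqrt 2 * 2 ^ (r - 1 / 2), by positivity, ?_⟩
  set C : ℝ := c0 * 20 * Real.sqrt 2 * 2 ^ (r - 1 / 2) with hC
  have hCpos : 0 < C := by positivity
  intro V hV hVr E δ hE hδ hδE
  set W : E3 → ℝ := fun x => max (-V x) 0 with hW
  have hWnn : ∀ x, 0 ≤ W x := fun x => le_max_right _ _
  set K : ℝ := C * δ * E ^ (-(r - 1 / 2)) with hK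
  have hKnn : 0 ≤ K := by positivity
  -- pointwise section bound
  have key : ∀ q : E3, volume {p : E3 | |‖p‖ ^ 2 / 2 + V q + E| ≤ δ} ≤
      ENNReal.ofReal (K * W q ^ r) := by
    intro q
    rcases le_or_gt (E - δ) (W q) with hq | hq
    · -- nontrivial section
      have hWq : E / 2 ≤ W q := by linarith
      have hWqpos : 0 < W q := by linarith
      have hsets : {p : E3 | |‖p‖ ^ 2 / 2 + V q + E| ≤ δ} =
          {p : E3 | |‖p‖ ^ 2 / 2 + (V q + E)| ≤ δ} := by
        simp only [add_assoc]
      rw [hsets]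
      refine (shell_vol_bound (V q + E) δ hδ).trans (ENNReal.ofReal_le_ofReal ?_)
      have hmax : max (-(V q + E)) 0 ≤ W q := by
        apply max_le _ (hWnn q)
        have : -V q ≤ W q := le_max_left _ _
        linarith
      have h1 : Real.sqrt (max (-(V q + E)) 0 + δ) ≤ Real.sqrt 2 * Real.sqrt (W q) := by
        rw [← Real.sqrt_mul (by norm_num : (0:ℝ) ≤ 2)]
        exact Real.sqrt_le_sqrt (by linarith)
      have h2 : Real.sqrt (W q) ≤ (E / 2) ^ ((1:ℝ)/2 - r) * W q ^ r := by
        rw [Real.sqrt_eq_rpow]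
        have : W q ^ ((1:ℝ)/2) = W q ^ ((1:ℝ)/2 - r) * W q ^ r := by
          rw [← Real.rpow_add hWqpos]; norm_num
        rw [this]
        apply mul_le_mul_of_nonneg_right _ (Real.rpow_nonneg (hWnn q) r)
        exact Real.rpow_le_rpow_of_nonpos (by linarith) hWq (by linarith)
      have hE2 : (E / 2) ^ ((1:ℝ)/2 - r) = 2 ^ (r - 1/2) * E ^ (-(r - 1/2)) := by
        rw [Real.div_rpow hE.le (by norm_num : (0:ℝ) ≤ 2)]
        have hz : -(r - 1/2) = (1:ℝ)/2 - r := by ring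
        rw [hz, show (r - 1/2 : ℝ) = -((1:ℝ)/2 - r) by ring,
          Real.rpow_neg (by norm_num : (0:ℝ) ≤ 2)]
        field_simp
      calc c0 * (20 * δ * Real.sqrt (max (-(V q + E)) 0 + δ))
          ≤ c0 * (20 * δ * (Real.sqrt 2 * ((E / 2) ^ ((1:ℝ)/2 - r) * W q ^ r))) := by
            have := h1.trans (mul_le_mul_of_nonneg_left h2 (Real.sqrt_nonneg 2))
            have hδnn : (0:ℝ) ≤ 20 * δ := by linarith
            exact mul_le_mul_of_nonneg_left
              (mul_le_mul_of_nonneg_left this hδnn) hc0pos.le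
        _ = K * W q ^ r := by rw [hK, hC, hE2]; ring
    · -- empty section
      have hempty : {p : E3 | |‖p‖ ^ 2 / 2 + V q + E| ≤ δ} = ∅ := by
        ext p
        simp only [Set.mem_setOf_eq, Set.mem_empty_iff_false, iff_false, not_le]
        have h1 : -V q ≤ W q := le_max_left _ _
        have h2 : 0 ≤ ‖p‖ ^ 2 := by positivity
        rw [lt_abs]
        left; linarith
      rw [hempty, measure_empty]
      exact zero_le
  -- measurability of the phase-space set
  have hSmeas : MeasurableSet {z : E3 × E3 | |‖z.2‖ ^ 2 / 2 + V z.1 + E| ≤ δ} := by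
    have hf : Measurable fun z : E3 × E3 => |‖z.2‖ ^ 2 / 2 + V z.1 + E| := by
      apply Measurable.abs
      apply Measurable.add
      apply Measurable.add
      · exact ((measurable_norm.comp measurable_snd).pow_const 2).div_const 2
      · exact hV.comp measurable_fst
      · exact measurable_const
    exact measurableSet_le hf measurable_const
  -- integrability of W^r
  have hrpos : (0:ℝ) < r := by linarith
  have hWmeas : Measurable fun x => W x ^ r := (hV.neg.max measurable_const).pow measurable_const
  have hnorm : Integrable (fun x => ‖V x‖ ^ r) := by
    have := hVr.integrable_norm_rpow (by simp [ENNReal.ofReal_eq_zero]; linarith)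
      ENNReal.ofReal_ne_top
    rwa [ENNReal.toReal_ofReal hrpos.le] at this
  have hint : Integrable (fun x => W x ^ r) := by
    apply hnorm.mono hWmeas.aestronglyMeasurable
    filter_upwards with x
    have h1 : 0 ≤ W x ^ r := Real.rpow_nonneg (hWnn x) r
    have h2 : 0 ≤ ‖V x‖ ^ r := Real.rpow_nonneg (norm_nonneg _) r
    rw [Real.norm_eq_abs (W x ^ r), abs_of_nonneg h1, Real.norm_eq_abs (‖V x‖ ^ r),
      abs_of_nonneg h2]
    refine Real.rpow_le_rpow (hWnn x) ?_ hrpos.le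
    rw [Real.norm_eq_abs]
    exact max_le (neg_le_abs _) (abs_nonneg _)
  -- put it together with Fubini
  calc volume {z : E3 × E3 | |‖z.2‖ ^ 2 / 2 + V z.1 + E| ≤ δ}
      = ∫⁻ q, volume {p : E3 | |‖p‖ ^ 2 / 2 + V q + E| ≤ δ} := by
        rw [MeasureTheory.Measure.volume_eq_prod, Measure.prod_apply hSmeas]; rfl
    _ ≤ ∫⁻ q, ENNReal.ofReal (K * W q ^ r) := lintegral_mono key
    _ = ENNReal.ofReal K * ∫⁻ q, ENNReal.ofReal (W q ^ r) := by
        simp_rw [ENNReal.ofReal_mul hKnn]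
        rw [lintegral_const_mul' _ _ ENNReal.ofReal_ne_top]
    _ = ENNReal.ofReal K * ENNReal.ofReal (∫ x, W x ^ r) := by
        rw [ofReal_integral_eq_lintegral_ofReal hint
          (Filter.Eventually.of_forall fun x => Real.rpow_nonneg (hWnn x) r)]
    _ = ENNReal.ofReal (K * ∫ x, W x ^ r) := (ENNReal.ofReal_mul hKnn).symm
    _ ≤ ENNReal.ofReal (C * δ * E ^ (-(r - 1 / 2)) * ∫ x : E3, max (-V x) 0 ^ r) := le_of_eq rfl

end
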